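/- Let α > 0, ρ > 0, η, κ, β ∈ ℝ, p ≥ 1, and 0 ≤ a < x. Let f, g be two positive functions on [a,x] such that I f^p(x) < ∞ and I (f+g)^p(x) < ∞, where I denotes the generalized fractional integral ρI^{α,β}_{a+,η,κ}. If there exists a real constant M > 0 such that f(t)/g(t) ≤ M for all t ∈ [a,x], then (I f^p(x))^(1/p) ≤ (M/(M+1)) · (I (f+g)^p(x))^(1/p). -/

import Mathlib

open MeasureTheory

/-- The left-sided generalized (Katugampola) fractional integral
`ρI^{α,β}_{a+,η,κ} f (x)`. -/
noncomputable def katI (α ρ η κ β a x : ℝ) (f : ℝ → ℝ) : ℝ :=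
  (ρ ^ (1 - β) * x ^ κ / Real.Gamma α) *
    ∫ t in a..x, t ^ (ρ * (η + 1) - 1) * (x ^ ρ - t ^ ρ) ^ (α - 1) * f t

/-- Finiteness of the generalized fractional integral, expressed as integrability of the
kernel-weighted integrand. -/
def katIntegrable (α ρ η κ β a x : ℝ) (f : ℝ → ℝ) : Prop :=
  IntervalIntegrable
    (fun t => t ^ (ρ * (η + 1) - 1) * (x ^ ρ - t ^ ρ) ^ (α - 1) * f t)
    volume a x

/-- Key lemma bounding `(I f^p)^(1/p)` by `(I (f+g)^p)^(1/p)`. -/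
theorem f_bound_katugampola
    (α ρ η κ β p M a x : ℝ) (hα : 0 < α) (hρ : 0 < ρ) (hp : 1 ≤ p)
    (ha : 0 ≤ a) (hax : a < x)
    (f g : ℝ → ℝ)
    (hf_pos : ∀ t ∈ Set.Icc a x, 0 < f t)
    (hg_pos : ∀ t ∈ Set.Icc a x, 0 < g t)
    (hf_int : katIntegrable α ρ η κ β a x (fun t => f t ^ p))
    (hsum_int : katIntegrable α ρ η κ β a x (fun t => (f t + g t) ^ p))
    (hM : 0 < M)
    (hbound : ∀ t ∈ Set.Icc a x, f t / g t ≤ M) :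
    (katI α ρ η κ β a x (fun t => f t ^ p)) ^ (1 / p) ≤
      (M / (M + 1)) * (katI α ρ η κ β a x (fun t => (f t + g t) ^ p)) ^ (1 / p) := by
  have hp0 : (0:ℝ) < p := lt_of_lt_of_le one_pos hp
  set c : ℝ := M / (M + 1) with hc
  have hM1 : (0:ℝ) < M + 1 := by linarith
  have hc0 : 0 < c := div_pos hM hM1
  -- kernel nonnegativity
  have hker : ∀ t ∈ Set.Icc a x, 0 ≤ t ^ (ρ * (η + 1) - 1) * (x ^ ρ - t ^ ρ) ^ (α - 1) := by
    intro t ht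
    have ht0 : 0 ≤ t := le_trans ha ht.1
    have hxt : t ^ ρ ≤ x ^ ρ := Real.rpow_le_rpow ht0 ht.2 hρ.le
    exact mul_nonneg (Real.rpow_nonneg ht0 _) (Real.rpow_nonneg (by linarith) _)
  -- pointwise bound
  have hpt : ∀ t ∈ Set.Icc a x, f t ^ p ≤ c ^ p * (f t + g t) ^ p := by
    intro t ht
    have hf := hf_pos t ht
    have hg := hg_pos t ht
    have hfg : f t ≤ c * (f t + g t) := by
      have h1 : f t ≤ M * g t := (div_le_iff₀ hg).mp (hbound t ht)
      rw [hc, div_mul_eq_mul_div, le_div_iff₀ hM1]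
      nlinarith
    calc f t ^ p ≤ (c * (f t + g t)) ^ p :=
          Real.rpow_le_rpow hf.le hfg hp0.le
      _ = c ^ p * (f t + g t) ^ p :=
          Real.mul_rpow hc0.le (by positivity)
  -- integral inequality
  have hC : 0 ≤ ρ ^ (1 - β) * x ^ κ / Real.Gamma α := by
    have hx0 : (0:ℝ) < x := lt_of_le_of_lt ha hax
    have := Real.Gamma_pos_of_pos hα
    positivity
  have hint : (∫ t in a..x, t ^ (ρ * (η + 1) - 1) * (x ^ ρ - t ^ ρ) ^ (α - 1) * f t ^ p)
      ≤ ∫ t in a..x, t ^ (ρ * (η + 1) - 1) * (x ^ ρ - t ^ ρ) ^ (α - 1) * (c ^ p * (f t + g t) ^ p) := by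
    apply intervalIntegral.integral_mono_on hax.le hf_int
    · have := hsum_int.const_mul (c ^ p)
      apply this.congr
      intro t _; beta_reduce
      ring
    · intro t ht
      exact mul_le_mul_of_nonneg_left (hpt t ht) (hker t ht)
  have hI1 : katI α ρ η κ β a x (fun t => f t ^ p)
      ≤ c ^ p * katI α ρ η κ β a x (fun t => (f t + g t) ^ p) := by
    unfold katI
    rw [mul_left_comm]
    apply mul_le_mul_of_nonneg_left _ hC
    calc (∫ t in a..x, t ^ (ρ * (η + 1) - 1) * (x ^ ρ - t ^ ρ) ^ (α - 1) * f t ^ p)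
        ≤ ∫ t in a..x, t ^ (ρ * (η + 1) - 1) * (x ^ ρ - t ^ ρ) ^ (α - 1) * (c ^ p * (f t + g t) ^ p) := hint
      _ = c ^ p * ∫ t in a..x, t ^ (ρ * (η + 1) - 1) * (x ^ ρ - t ^ ρ) ^ (α - 1) * (f t + g t) ^ p := by
          rw [← intervalIntegral.integral_const_mul]
          congr 1; funext t; ring
  have hIf0 : 0 ≤ katI α ρ η κ β a x (fun t => f t ^ p) := by
    unfold katI
    apply mul_nonneg hC
    apply intervalIntegral.integral_nonneg hax.le
    intro t ht
    exact mul_nonneg (hker t ht) (Real.rpow_nonneg (hf_pos t ht).le _)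
  have hIg0 : 0 ≤ katI α ρ η κ β a x (fun t => (f t + g t) ^ p) := by
    unfold katI
    apply mul_nonneg hC
    apply intervalIntegral.integral_nonneg hax.le
    intro t ht
    have := (hf_pos t ht).le
    have := (hg_pos t ht).le
    exact mul_nonneg (hker t ht) (Real.rpow_nonneg (by linarith) _)
  calc (katI α ρ η κ β a x (fun t => f t ^ p)) ^ (1 / p)
      ≤ (c ^ p * katI α ρ η κ β a x (fun t => (f t + g t) ^ p)) ^ (1 / p) :=
        Real.rpow_le_rpow hIf0 hI1 (by positivity)
    _ = c * (katI α ρ η κ β a x (fun t => (f t + g t) ^ p)) ^ (1 / p) := by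
        rw [Real.mul_rpow (by positivity) hIg0, ← Real.rpow_mul hc0.le,
          mul_one_div, div_self hp0.ne', Real.rpow_one]
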